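/- Let X ≥ 3 and n ≥ 1 be natural numbers, and let T be a finite tree on N vertices in which every vertex has degree at most X. If every simple path in T contains at most 2n vertices, then N ≤ 2·((X−1)^n − 1)/(X−2). -/

import Mathlib

section TreeHelpers
open SimpleGraph Finset

variable {V : Type} {G : SimpleGraph V}

lemma tree_path_length (hG : G.IsTree) {x y : V} {p : G.Walk x y} (hp : p.IsPath) :
    p.length = G.dist x y := by
  classical
  obtain ⟨w, hw⟩ := hG.isConnected.exists_walk_length_eq_dist x y
  have h2 : p = w.bypass := (hG.existsUnique_path x y).unique hp w.bypass_isPath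
  refine le_antisymm ?_ (SimpleGraph.dist_le p)
  rw [h2, ← hw]
  exact w.length_bypass_le

lemma tree_mem_support_dist (hG : G.IsTree) {x y z : V} {p : G.Walk x y} (hp : p.IsPath)
    (hz : z ∈ p.support) : G.dist x z + G.dist z y = G.dist x y := by
  classical
  rw [← tree_path_length hG hp, ← tree_path_length hG (hp.takeUntil hz),
    ← tree_path_length hG (hp.dropUntil hz)]
  rw [← congrArg SimpleGraph.Walk.length (p.take_spec hz), SimpleGraph.Walk.length_append]

lemma tree_append_path (hG : G.IsTree) {x y z : V} {p : G.Walk x y} {q : G.Walk y z}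
    (hp : p.IsPath) (hq : q.IsPath) (h : ∀ w ∈ p.support, w ∈ q.support → w = y) :
    (p.append q).IsPath := by
  rw [SimpleGraph.Walk.isPath_def, SimpleGraph.Walk.support_append, List.nodup_append]
  refine ⟨hp.support_nodup, ?_, ?_⟩
  · have := hq.support_nodup
    rw [q.support_eq_cons, List.nodup_cons] at this
    exact this.2
  · intro a ha a' ha' hne; subst hne
    have : a = y := h a ha (List.mem_of_mem_tail ha')
    subst this
    have := hq.support_nodup
    rw [q.support_eq_cons, List.nodup_cons] at this
    exact this.1 ha'

lemma tree_adj_dist (hG : G.IsTree) {u v : V} (hadj : G.Adj u v) (w : V) :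
    G.dist v w = G.dist u w + 1 ∨ G.dist u w = G.dist v w + 1 := by
  classical
  have hconn := hG.isConnected
  have huv : G.dist u v = 1 := (SimpleGraph.dist_eq_one_iff_adj).2 hadj
  have hvu : G.dist v u = 1 := (SimpleGraph.dist_eq_one_iff_adj).2 hadj.symm
  -- general claim: if dist u w = dist v w, contradiction
  have main : G.dist u w ≠ G.dist v w := by
    intro heq
    obtain ⟨p, hp, -⟩ := hG.existsUnique_path w u
    have hpl : p.length = G.dist w u := tree_path_length hG hp
    have hvns : v ∉ p.support := by
      intro hv
      have := tree_mem_support_dist hG hp hv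
      rw [hvu] at this
      have h1 : G.dist w v = G.dist w u - 1 := by omega
      have c1 : G.dist w u = G.dist u w := SimpleGraph.dist_comm ..
      have c2 : G.dist w v = G.dist v w := SimpleGraph.dist_comm ..
      have h3 : G.dist w u ≠ 0 := by
        intro h0
        have hwu' : w = u := (hconn.dist_eq_zero_iff).1 h0
        have hz : G.dist v u = 0 := by rw [← hwu', ← heq, hwu', SimpleGraph.dist_self]
        exact hadj.ne ((hconn.dist_eq_zero_iff).1 hz).symm
      omega
    have hq : (p.append (SimpleGraph.Walk.cons hadj SimpleGraph.Walk.nil)).IsPath := by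
      refine tree_append_path hG hp ?_ ?_
      · simp [hadj.ne]
      · intro x hx hx'
        simp at hx'
        rcases hx' with rfl | rfl
        · rfl
        · exact absurd hx hvns
    have := tree_path_length hG hq
    rw [SimpleGraph.Walk.length_append] at this
    simp at this
    rw [hpl] at this
    have c1 : G.dist w u = G.dist u w := SimpleGraph.dist_comm ..
    have c2 : G.dist w v = G.dist v w := SimpleGraph.dist_comm ..
    omega
  have t1 : G.dist v w ≤ G.dist u w + 1 := by
    have := hconn.dist_triangle (u := v) (v := u) (w := w)
    rw [hvu] at this; omega
  have t2 : G.dist u w ≤ G.dist v w + 1 := by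
    have := hconn.dist_triangle (u := u) (v := v) (w := w)
    rw [huv] at this; omega
  omega

lemma tree_key (hG : G.IsTree) {u v b w : V} (hadj : G.Adj u v)
    (hb : G.dist u b = G.dist v b + 1) (hw : G.dist v w = G.dist u w + 1) :
    G.dist w b = G.dist w u + G.dist u b := by
  classical
  have hconn := hG.isConnected
  obtain ⟨r, hr, -⟩ := hG.existsUnique_path v b
  have hur : u ∉ r.support := by
    intro hu
    have := tree_mem_support_dist hG hr hu
    have h1 : G.dist v u = 1 := (SimpleGraph.dist_eq_one_iff_adj).2 hadj.symm
    omega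
  have hq : (SimpleGraph.Walk.cons hadj r).IsPath := hr.cons hur
  obtain ⟨p, hp, -⟩ := hG.existsUnique_path w u
  have happ : (p.append (SimpleGraph.Walk.cons hadj r)).IsPath := by
    refine tree_append_path hG hp hq ?_
    intro x hx hx'
    rw [SimpleGraph.Walk.support_cons] at hx'
    rcases List.mem_cons.1 hx' with rfl | hxr
    · rfl
    · exfalso
      -- x on r : dist v x + dist x b = dist v b ; x on q : dist u x + dist x b = dist u b
      have e1 := tree_mem_support_dist hG hr hxr
      have e2 := tree_mem_support_dist hG hq (by rw [SimpleGraph.Walk.support_cons]; exact List.mem_cons_of_mem _ hxr)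
      have e3 := tree_mem_support_dist hG hp hx
      -- dist u x = dist v x + 1
      have e4 : G.dist u x = G.dist v x + 1 := by omega
      -- dist w v ≤ dist w x + dist x v
      have e5 : G.dist w v ≤ G.dist w x + G.dist x v := hconn.dist_triangle
      have e6 : G.dist x v = G.dist v x := SimpleGraph.dist_comm ..
      have e9 : G.dist u x = G.dist x u := SimpleGraph.dist_comm ..
      have e10 : G.dist w x = G.dist x w := SimpleGraph.dist_comm ..
      have e7 : G.dist w v = G.dist v w := SimpleGraph.dist_comm ..
      have e8 : G.dist w u = G.dist u w := SimpleGraph.dist_comm ..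
      omega
  have := tree_path_length hG happ
  rw [SimpleGraph.Walk.length_append, SimpleGraph.Walk.length_cons,
    tree_path_length hG hp, tree_path_length hG hr] at this
  omega

lemma tree_exists_parent (hG : G.IsTree) {u w : V} (h : 0 < G.dist u w) :
    ∃ p : V, G.Adj w p ∧ G.dist u p + 1 = G.dist u w := by
  classical
  obtain ⟨q, hq, -⟩ := hG.existsUnique_path w u
  have hql : q.length = G.dist w u := tree_path_length hG hq
  have hwu : G.dist w u = G.dist u w := SimpleGraph.dist_comm ..
  have hnil : ¬ q.Nil := by
    intro hn
    rw [SimpleGraph.Walk.nil_iff_length_eq] at hn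
    omega
  refine ⟨q.getVert 1, q.adj_snd hnil, ?_⟩
  have hmem : q.getVert 1 ∈ q.support := by
    rw [SimpleGraph.Walk.mem_support_iff_exists_getVert]
    exact ⟨1, rfl, by omega⟩
  have := tree_mem_support_dist hG hq hmem
  have h1 : G.dist w (q.getVert 1) = 1 :=
    (SimpleGraph.dist_eq_one_iff_adj).2 (q.adj_snd hnil)
  have h2 : G.dist (q.getVert 1) u = G.dist u (q.getVert 1) := SimpleGraph.dist_comm ..
  omega

lemma dist_getVert_le (hG : G.IsTree) {a b : V} (p : G.Walk a b) (i : ℕ) :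
    G.dist a (p.getVert i) ≤ i := by
  induction i with
  | zero => simp [p.getVert_zero, SimpleGraph.dist_self]
  | succ i ih =>
    by_cases h : i < p.length
    · have hadj := p.adj_getVert_succ h
      have ht := hG.isConnected.dist_triangle (u := a) (v := p.getVert i) (w := p.getVert (i+1))
      have h1 : G.dist (p.getVert i) (p.getVert (i+1)) = 1 :=
        (SimpleGraph.dist_eq_one_iff_adj).2 hadj
      omega
    · have h1 : p.getVert (i+1) = b := p.getVert_of_length_le (by omega)
      have h2 : p.getVert i = b := p.getVert_of_length_le (by omega)
      rw [h1, ← h2]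
      omega

open Classical in
noncomputable def par (G : SimpleGraph V) (u : V) (w : V) : V :=
  if h : ∃ p, G.Adj w p ∧ G.dist u p + 1 = G.dist u w then h.choose else w

lemma par_spec (hG : G.IsTree) {u w : V} (h : 0 < G.dist u w) :
    G.Adj w (par G u w) ∧ G.dist u (par G u w) + 1 = G.dist u w := by
  have hex := tree_exists_parent hG h
  unfold par
  split
  · next hex' => exact hex'.choose_spec
  · next hex' => exact absurd hex hex'

lemma level_count [Fintype V] [DecidableRel G.Adj] (hG : G.IsTree)
    {u v : V} (hadj : G.Adj u v) {X : ℕ} (hX : 3 ≤ X) (hdeg : ∀ w : V, G.degree w ≤ X)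
    (j : ℕ) :
    (Finset.univ.filter
      (fun w => G.dist v w = G.dist u w + 1 ∧ G.dist u w = j)).card ≤ (X-1)^j := by
  classical
  have hconn := hG.isConnected
  have huv : G.dist u v = 1 := (SimpleGraph.dist_eq_one_iff_adj).2 hadj
  induction j with
  | zero =>
    have hsub : (Finset.univ.filter
        (fun w => G.dist v w = G.dist u w + 1 ∧ G.dist u w = 0)) ⊆ {u} := by
      intro w hw
      simp only [Finset.mem_filter, Finset.mem_univ, true_and] at hw
      simp only [Finset.mem_singleton]
      exact ((hconn.dist_eq_zero_iff).1 hw.2).symm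
    calc _ ≤ ({u} : Finset V).card := Finset.card_le_card hsub
    _ = 1 := Finset.card_singleton u
    _ ≤ (X-1)^0 := by simp
  | succ j ih =>
    have Hf : ∀ w ∈ Finset.univ.filter
        (fun w => G.dist v w = G.dist u w + 1 ∧ G.dist u w = j + 1),
        par G u w ∈ Finset.univ.filter
          (fun w => G.dist v w = G.dist u w + 1 ∧ G.dist u w = j) := by
      intro w hw
      simp only [Finset.mem_filter, Finset.mem_univ, true_and] at hw ⊢
      have hp := par_spec hG (u := u) (w := w) (by omega)
      rcases tree_adj_dist hG hadj (par G u w) with hc | hc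
      · exact ⟨hc, by omega⟩
      · exfalso
        have ht : G.dist v w ≤ G.dist v (par G u w) + G.dist (par G u w) w :=
          hconn.dist_triangle
        have h1 : G.dist (par G u w) w = 1 := (SimpleGraph.dist_eq_one_iff_adj).2 hp.1.symm
        omega
    have fib : ∀ p ∈ Finset.univ.filter
        (fun w => G.dist v w = G.dist u w + 1 ∧ G.dist u w = j),
        ((Finset.univ.filter
          (fun w => G.dist v w = G.dist u w + 1 ∧ G.dist u w = j + 1)).filter
            (fun x => par G u x = p)).card ≤ X - 1 := by
      intro p hp
      simp only [Finset.mem_filter, Finset.mem_univ, true_and] at hp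
      -- special neighbor
      obtain ⟨s0, hs0adj, hs0⟩ : ∃ s0, G.Adj p s0 ∧
          ¬ (G.dist v s0 = G.dist u s0 + 1 ∧ G.dist u s0 = j + 1) := by
        by_cases hj : j = 0
        · have hpu : p = u := by
            subst hj
            exact ((hconn.dist_eq_zero_iff).1 hp.2).symm
          subst hpu
          exact ⟨v, hadj, by intro hcon; have hvv := SimpleGraph.dist_self (G := G) (v := v); omega⟩
        · have hps := par_spec hG (u := u) (w := p) (by omega)
          exact ⟨par G u p, hps.1, by intro hcon; omega⟩
      have hsub : ((Finset.univ.filter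
          (fun w => G.dist v w = G.dist u w + 1 ∧ G.dist u w = j + 1)).filter
            (fun x => par G u x = p)) ⊆ (G.neighborFinset p).erase s0 := by
        intro x hx
        simp only [Finset.mem_filter, Finset.mem_univ, true_and] at hx
        obtain ⟨⟨hx1, hx2⟩, hx3⟩ := hx
        have hpx := par_spec hG (u := u) (w := x) (by omega)
        rw [hx3] at hpx
        rw [Finset.mem_erase, SimpleGraph.mem_neighborFinset]
        refine ⟨?_, hpx.1.symm⟩
        rintro rfl
        exact hs0 ⟨hx1, hx2⟩
      calc _ ≤ ((G.neighborFinset p).erase s0).card := Finset.card_le_card hsub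
      _ = (G.neighborFinset p).card - 1 :=
        Finset.card_erase_of_mem (by rwa [SimpleGraph.mem_neighborFinset])
      _ = G.degree p - 1 := by rw [SimpleGraph.card_neighborFinset_eq_degree]
      _ ≤ X - 1 := by have := hdeg p; omega
    calc _ ≤ (X-1) * (Finset.univ.filter
        (fun w => G.dist v w = G.dist u w + 1 ∧ G.dist u w = j)).card :=
      Finset.card_le_mul_card_image_of_maps_to Hf (X-1) fib
    _ ≤ (X-1) * (X-1)^j := Nat.mul_le_mul_left _ ih
    _ = (X-1)^(j+1) := (pow_succ (X-1) j).symm ▸ (mul_comm _ _)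

lemma side_count [Fintype V] [DecidableRel G.Adj] (hG : G.IsTree)
    {u v : V} (hadj : G.Adj u v) {X n : ℕ} (hX : 3 ≤ X) (hdeg : ∀ w : V, G.degree w ≤ X)
    (hbound : ∀ w : V, G.dist v w = G.dist u w + 1 → G.dist u w < n) :
    (Finset.univ.filter (fun w => G.dist v w = G.dist u w + 1)).card
      ≤ ∑ j ∈ Finset.range n, (X-1)^j := by
  classical
  rw [Finset.card_eq_sum_card_fiberwise (f := fun w => G.dist u w)
    (t := Finset.range n) (by
      intro x hx
      simp only [Finset.mem_coe, Finset.mem_filter, Finset.mem_univ, true_and] at hx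
      exact Finset.mem_range.2 (hbound x hx))]
  refine Finset.sum_le_sum ?_
  intro j hj
  rw [Finset.filter_filter]
  exact level_count hG hadj hX hdeg j

end TreeHelpers

/-- If every vertex of a finite tree `T` has degree at most `X` (where `X ≥ 3`) and
every simple path of `T` contains at most `2·n` vertices (where `n ≥ 1`), then the
number `N` of vertices satisfies `N ≤ 2·((X−1)^n − 1)/(X−2)`. -/
theorem tree_size_bound_even_diameter {V : Type} [Fintype V] (G : SimpleGraph V)
    [DecidableRel G.Adj] (hG : G.IsTree) (X n : ℕ) (hX : 3 ≤ X) (hn : 1 ≤ n)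
    (hdeg : ∀ v : V, G.degree v ≤ X)
    (hpath : ∀ (a b : V) (p : G.Walk a b), p.IsPath → p.support.length ≤ 2 * n) :
    (Fintype.card V : ℚ) ≤ 2 * (((X : ℚ) - 1) ^ n - 1) / ((X : ℚ) - 2) := by
  classical
  have hconn := hG.isConnected
  set S : ℕ := ∑ j ∈ Finset.range n, (X-1)^j with hS
  have hXQ : (3:ℚ) ≤ (X:ℚ) := by exact_mod_cast hX
  have hcast : ((X - 1 : ℕ) : ℚ) = (X:ℚ) - 1 := by
    have h1 : (1:ℕ) ≤ X := by omega
    exact Nat.cast_sub h1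
  have hSQ : (S:ℚ) = (((X:ℚ)-1)^n - 1)/((X:ℚ)-2) := by
    have e : (X:ℚ)-1-1 = (X:ℚ)-2 := by ring
    have hne : ((X:ℚ)-1) ≠ 1 := by
      intro h
      have : (X:ℚ) = 2 := by linarith
      linarith
    rw [hS, Nat.cast_sum]
    simp_rw [Nat.cast_pow, hcast]
    rw [geom_sum_eq hne n, e]
  have hmain : Fintype.card V ≤ 2 * S := by
    have hS1 : 1 ≤ S := by
      have h0 : (X-1)^0 ≤ S :=
        Finset.single_le_sum (f := fun j => (X-1)^j) (fun i _ => Nat.zero_le _)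
          (Finset.mem_range.2 (by omega))
      simpa using h0
    rcases subsingleton_or_nontrivial V with hsub | hnt
    · have : Fintype.card V ≤ 1 := Fintype.card_le_one_iff_subsingleton.2 hsub
      omega
    · obtain ⟨⟨a, b⟩, -, hmax⟩ := Finset.exists_max_image (Finset.univ : Finset (V × V))
        (fun q => G.dist q.1 q.2) (Finset.univ_nonempty)
      set D := G.dist a b with hD
      have hmax' : ∀ x y : V, G.dist x y ≤ D := fun x y => hmax (x, y) (Finset.mem_univ _)
      obtain ⟨x, y, hxy⟩ := Nontrivial.exists_pair_ne (α := V)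
      have hD1 : 1 ≤ D := le_trans (hconn.pos_dist_of_ne hxy) (hmax' x y)
      obtain ⟨p, hp, -⟩ := hG.existsUnique_path a b
      have hpl : p.length = D := tree_path_length hG hp
      have hD2 : D + 1 ≤ 2 * n := by
        have hsup := hpath a b p hp
        rw [SimpleGraph.Walk.length_support, hpl] at hsup
        omega
      set k := D - n with hk
      have hkD : k + 1 ≤ D := by omega
      set u := p.getVert k with hu'
      set v := p.getVert (k+1) with hv'
      have hadj : G.Adj u v := p.adj_getVert_succ (by omega)
      have hvert : ∀ i, i ≤ D → G.dist a (p.getVert i) = i ∧ G.dist (p.getVert i) b = D - i := by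
        intro i hi
        have h1 := dist_getVert_le hG p i
        have h2 := dist_getVert_le hG p.reverse (D - i)
        have h3 : p.reverse.getVert (D - i) = p.getVert i := by
          rw [SimpleGraph.Walk.getVert_reverse]
          congr 1
          omega
        rw [h3] at h2
        have h4 : p.getVert i ∈ p.support :=
          SimpleGraph.Walk.mem_support_iff_exists_getVert.2 ⟨i, rfl, by omega⟩
        have h5 := tree_mem_support_dist hG hp h4
        have c1 : G.dist b (p.getVert i) = G.dist (p.getVert i) b := SimpleGraph.dist_comm ..
        constructor <;> omega
      obtain ⟨hu1, hu2⟩ := hvert k (by omega)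
      obtain ⟨hv1, hv2⟩ := hvert (k+1) (by omega)
      rw [← hu'] at hu1 hu2
      rw [← hv'] at hv1 hv2
      have hAb : ∀ w, G.dist v w = G.dist u w + 1 → G.dist u w < n := by
        intro w hw
        have hb' : G.dist u b = G.dist v b + 1 := by omega
        have hkey := tree_key hG hadj hb' hw
        have h2 : G.dist w b ≤ D := hmax' w b
        have c : G.dist w u = G.dist u w := SimpleGraph.dist_comm ..
        omega
      have hBb : ∀ w, G.dist u w = G.dist v w + 1 → G.dist v w < n := by
        intro w hw
        have c1 : G.dist v a = G.dist a v := SimpleGraph.dist_comm ..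
        have c2 : G.dist u a = G.dist a u := SimpleGraph.dist_comm ..
        have ha' : G.dist v a = G.dist u a + 1 := by omega
        have hkey := tree_key hG hadj.symm ha' hw
        have h2 : G.dist w a ≤ D := hmax' w a
        have c : G.dist w v = G.dist v w := SimpleGraph.dist_comm ..
        omega
      have hA := side_count hG hadj hX hdeg hAb
      have hB := side_count hG hadj.symm hX hdeg hBb
      have hunion : (Finset.univ : Finset V) ⊆
          (Finset.univ.filter (fun w => G.dist v w = G.dist u w + 1)) ∪
          (Finset.univ.filter (fun w => G.dist u w = G.dist v w + 1)) := by
        intro w _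
        rcases tree_adj_dist hG hadj w with hc | hc
        · exact Finset.mem_union_left _ (by simp [hc])
        · exact Finset.mem_union_right _ (by simp [hc])
      calc Fintype.card V = (Finset.univ : Finset V).card := Finset.card_univ.symm
      _ ≤ ((Finset.univ.filter (fun w => G.dist v w = G.dist u w + 1)) ∪
          (Finset.univ.filter (fun w => G.dist u w = G.dist v w + 1))).card :=
        Finset.card_le_card hunion
      _ ≤ (Finset.univ.filter (fun w => G.dist v w = G.dist u w + 1)).card +
          (Finset.univ.filter (fun w => G.dist u w = G.dist v w + 1)).card :=
        Finset.card_union_le _ _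
      _ ≤ S + S := Nat.add_le_add hA hB
      _ = 2 * S := by omega
  calc (Fintype.card V : ℚ) ≤ ((2 * S : ℕ) : ℚ) := by exact_mod_cast hmain
  _ = 2 * (S : ℚ) := by push_cast; ring
  _ = 2 * (((X : ℚ) - 1) ^ n - 1) / ((X : ℚ) - 2) := by rw [hSQ]; ring
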